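/- For every integer k ≥ 1: the formula ∘¬^{2k}∘p is a theorem of H^{2(k+1)−1} (i.e., ∅ ⊢_{H^{2(k+1)−1}} ∘¬^{2k}∘p), but it is not a theorem of H^{2k−1} (i.e., not ∅ ⊢_{H^{2k−1}} ∘¬^{2k}∘p). Consequently the chain ⊢_{H^1} ⊆ ⊢_{H^3} ⊆ ⊢_{H^5} ⊆ … is strictly increasing. -/

import Mathlib

/-- Formulas over the signature Σ with unary ¬, ∘ and binary ∧, ∨, →,
freely generated from a denumerable set of propositional variables. -/
inductive Fm : Type where
  | var : ℕ → Fm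
  | neg : Fm → Fm
  | circ : Fm → Fm
  | conj : Fm → Fm → Fm
  | disj : Fm → Fm → Fm
  | imp : Fm → Fm → Fm
deriving DecidableEq

/-- Substitutions act homomorphically on formulas. -/
def subst (σ : ℕ → Fm) : Fm → Fm
  | .var n => σ n
  | .neg φ => .neg (subst σ φ)
  | .circ φ => .circ (subst σ φ)
  | .conj φ ψ => .conj (subst σ φ) (subst σ ψ)
  | .disj φ ψ => .disj (subst σ φ) (subst σ ψ)
  | .imp φ ψ => .imp (subst σ φ) (subst σ ψ)

/-- A Set-Fmla rule schema: a finite antecedent and a single succedent formula. -/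
abbrev Rule : Type := Finset Fm × Fm

/-- Derivability in a Set-Fmla Hilbert system: `Derives H Γ φ` holds iff φ can be
obtained from members of Γ by finitely many applications of substitution instances
of rules of `H`. -/
inductive Derives (H : Set Rule) : Set Fm → Fm → Prop where
  | prem : ∀ {Γ : Set Fm} {φ : Fm}, φ ∈ Γ → Derives H Γ φ
  | rule : ∀ {Γ : Set Fm} (r : Rule) (σ : ℕ → Fm), r ∈ H →
      (∀ ψ ∈ r.1, Derives H Γ (subst σ ψ)) → Derives H Γ (subst σ r.2)

/-- Iterated negation: `negIter j φ = ¬^j φ`. -/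
def negIter : ℕ → Fm → Fm
  | 0, φ => φ
  | n + 1, φ => .neg (negIter n φ)

/-- (Ax10)  p ∨ ¬p. -/
def ax10 : Fm := .disj (.var 0) (.neg (.var 0))
/-- (bc1)  ∘p → (p → (¬p → q)). -/
def bc1 : Fm := .imp (.circ (.var 0)) (.imp (.var 0) (.imp (.neg (.var 0)) (.var 1)))
/-- (ci)  ¬∘p → (p ∧ ¬p). -/
def ci : Fm := .imp (.neg (.circ (.var 0))) (.conj (.var 0) (.neg (.var 0)))
/-- (ci_j)  ∘¬^j∘p. -/
def cij (j : ℕ) : Fm := .circ (negIter j (.circ (.var 0)))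

/-- `HmCi B` : the Hilbert system extending the positive-classical base `B`
with (Ax10), (bc1), (ci) and (ci_j) for every j ≥ 0. -/
def HmCi (B : Set Rule) : Set Rule :=
  B ∪ {(∅, ax10), (∅, bc1), (∅, ci)} ∪ {r : Rule | ∃ j : ℕ, r = (∅, cij j)}

/-- `HkSys B k` : the Hilbert system extending the positive-classical base `B`
with (Ax10), (bc1), (ci) and (ci_j) for 0 ≤ j ≤ k only. -/
def HkSys (B : Set Rule) (k : ℕ) : Set Rule :=
  B ∪ {(∅, ax10), (∅, bc1), (∅, ci)} ∪ {r : Rule | ∃ j ≤ k, r = (∅, cij j)}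

/-- Carrier V_k = {1,…,2(k+1)} of the matrix M_k. -/
def Vk (k : ℕ) : Set ℕ := {x | 1 ≤ x ∧ x ≤ 2 * (k + 1)}
/-- Designated set D_k = {k+2,…,2(k+1)} of the matrix M_k. -/
def Dk (k : ℕ) : Set ℕ := {x | k + 2 ≤ x ∧ x ≤ 2 * (k + 1)}

instance (k x : ℕ) : Decidable (x ∈ Dk k) :=
  inferInstanceAs (Decidable (k + 2 ≤ x ∧ x ≤ 2 * (k + 1)))

/-- Disjunction of M_k: 1 if both arguments are undesignated, k+2 otherwise. -/
def mOr (k x y : ℕ) : ℕ := if x ∉ Dk k ∧ y ∉ Dk k then 1 else k + 2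
/-- Conjunction of M_k: k+2 if both arguments are designated, 1 otherwise. -/
def mAnd (k x y : ℕ) : ℕ := if x ∈ Dk k ∧ y ∈ Dk k then k + 2 else 1
/-- Implication of M_k: 1 if the first argument is designated and the second is not,
k+2 otherwise. -/
def mImp (k x y : ℕ) : ℕ := if x ∈ Dk k ∧ y ∉ Dk k then 1 else k + 2
/-- Consistency operator of M_k: 1 at 2(k+1), k+2 elsewhere. -/
def mCirc (k x : ℕ) : ℕ := if x = 2 * (k + 1) then 1 else k + 2
/-- Negation of M_k: ¬x = k+2 if x ∈ {1, 2(k+1)}; ¬x = x + (k+1) if 2 ≤ x ≤ k+1;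
¬x = x − k if k+2 ≤ x ≤ 2k+1 (values outside the carrier are irrelevant). -/
def mNeg (k x : ℕ) : ℕ :=
  if x = 1 ∨ x = 2 * (k + 1) then k + 2
  else if 2 ≤ x ∧ x ≤ k + 1 then x + (k + 1)
  else if k + 2 ≤ x ∧ x ≤ 2 * k + 1 then x - k
  else x

/-- Classical conjunction on the two-element Boolean matrix B₂ (carrier {0,1}). -/
def b2And (x y : ℕ) : ℕ := if x = 1 ∧ y = 1 then 1 else 0
/-- Classical disjunction on B₂. -/
def b2Or (x y : ℕ) : ℕ := if x = 1 ∨ y = 1 then 1 else 0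
/-- Classical implication on B₂. -/
def b2Imp (x y : ℕ) : ℕ := if x = 1 ∧ y = 0 then 0 else 1
/-- The map h : V_k → {0,1} sending designated values to 1 and the rest to 0. -/
def hmap (k x : ℕ) : ℕ := if x ∈ Dk k then 1 else 0

/-- Homomorphic valuations on the matrix M_k. -/
def IsValMk (k : ℕ) (v : Fm → ℕ) : Prop :=
  (∀ φ : Fm, v φ ∈ Vk k) ∧
  (∀ φ ψ : Fm, v (.conj φ ψ) = mAnd k (v φ) (v ψ)) ∧
  (∀ φ ψ : Fm, v (.disj φ ψ) = mOr k (v φ) (v ψ)) ∧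
  (∀ φ ψ : Fm, v (.imp φ ψ) = mImp k (v φ) (v ψ)) ∧
  (∀ φ : Fm, v (.neg φ) = mNeg k (v φ)) ∧
  (∀ φ : Fm, v (.circ φ) = mCirc k (v φ))

/-- Valuations on the two-element Boolean matrix B₂ over the signature {∧,∨,→}:
maps into {0,1} commuting with the positive connectives. -/
def IsValB2 (v : Fm → ℕ) : Prop :=
  (∀ φ : Fm, v φ = 0 ∨ v φ = 1) ∧
  (∀ φ ψ : Fm, v (.conj φ ψ) = b2And (v φ) (v ψ)) ∧
  (∀ φ ψ : Fm, v (.disj φ ψ) = b2Or (v φ) (v ψ)) ∧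
  (∀ φ ψ : Fm, v (.imp φ ψ) = b2Imp (v φ) (v ψ))

/-- A rule is sound for B₂ when every B₂-valuation designating all its premises
designates its conclusion. -/
def SoundB2 (r : Rule) : Prop :=
  ∀ v : Fm → ℕ, IsValB2 v → (∀ ψ ∈ r.1, v ψ = 1) → v r.2 = 1

/-- Positive formulas: built from variables using only ∧, ∨, →. -/
inductive Positive : Fm → Prop where
  | var : ∀ n : ℕ, Positive (.var n)
  | conj : ∀ {φ ψ : Fm}, Positive φ → Positive ψ → Positive (.conj φ ψ)
  | disj : ∀ {φ ψ : Fm}, Positive φ → Positive ψ → Positive (.disj φ ψ)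
  | imp : ∀ {φ ψ : Fm}, Positive φ → Positive ψ → Positive (.imp φ ψ)


/-! ### Auxiliary lemmas -/

lemma subst_var (φ : Fm) : subst .var φ = φ := by
  induction φ <;> simp [subst, *]

lemma subst_negIter (σ : ℕ → Fm) (j : ℕ) (φ : Fm) :
    subst σ (negIter j φ) = negIter j (subst σ φ) := by
  induction j with
  | zero => rfl
  | succ j ih => simp [negIter, subst, ih]

lemma derives_mono {H H' : Set Rule} (hH : H ⊆ H') {Γ : Set Fm} {φ : Fm}
    (h : Derives H Γ φ) : Derives H' Γ φ := by
  induction h with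
  | prem h => exact .prem h
  | rule r σ hr _ ih => exact .rule r σ (hH hr) ih

lemma hkSys_mono (B : Set Rule) {m n : ℕ} (hmn : m ≤ n) : HkSys B m ⊆ HkSys B n := by
  intro r hr
  rcases hr with h | h
  · exact Or.inl h
  · rcases h with ⟨j, hj, rfl⟩
    exact Or.inr ⟨j, le_trans hj hmn, rfl⟩

lemma negIter_val {k : ℕ} {v : Fm → ℕ} (hneg : ∀ φ, v (.neg φ) = mNeg k (v φ)) :
    ∀ (j : ℕ) (φ : Fm), v (negIter j φ) = (mNeg k)^[j] (v φ) := by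
  intro j φ
  induction j with
  | zero => rfl
  | succ j ih =>
    rw [negIter, hneg, ih, Function.iterate_succ_apply']

lemma mem_Dk {k x : ℕ} : x ∈ Dk k ↔ k + 2 ≤ x ∧ x ≤ 2 * (k + 1) := Iff.rfl
lemma mem_Vk {k x : ℕ} : x ∈ Vk k ↔ 1 ≤ x ∧ x ≤ 2 * (k + 1) := Iff.rfl

lemma one_not_mem_Dk {k : ℕ} : (1 : ℕ) ∉ Dk k := by
  rw [mem_Dk]; omega

lemma k2_mem_Dk {k : ℕ} : k + 2 ∈ Dk k := by
  rw [mem_Dk]; omega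

lemma mAnd_mem {k a b : ℕ} : mAnd k a b ∈ Dk k ↔ (a ∈ Dk k ∧ b ∈ Dk k) := by
  unfold mAnd; split_ifs with h
  · simp [k2_mem_Dk]; tauto
  · simp [one_not_mem_Dk]; tauto

lemma mOr_mem {k a b : ℕ} : mOr k a b ∈ Dk k ↔ (a ∈ Dk k ∨ b ∈ Dk k) := by
  unfold mOr; split_ifs with h
  · simp [one_not_mem_Dk]; tauto
  · simp [k2_mem_Dk]; tauto

lemma mImp_mem {k a b : ℕ} : mImp k a b ∈ Dk k ↔ (a ∈ Dk k → b ∈ Dk k) := by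
  unfold mImp; split_ifs with h
  · simp [one_not_mem_Dk]; tauto
  · simp [k2_mem_Dk]; tauto

lemma mCirc_mem {k a : ℕ} : mCirc k a ∈ Dk k ↔ a ≠ 2 * (k + 1) := by
  unfold mCirc; split_ifs with h
  · simp [one_not_mem_Dk, h]
  · simp [k2_mem_Dk, h]

lemma mNeg_of_not_mem {k a : ℕ} (ha : a ∈ Vk k) (h : a ∉ Dk k) :
    mNeg k a ∈ Dk k := by
  rw [mem_Vk] at ha; rw [mem_Dk] at *
  unfold mNeg; split_ifs <;> omega

lemma mNeg_not_mem_of_mem {k a : ℕ} (h1 : a ∈ Dk k) (h2 : a ≠ 2 * (k + 1)) :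
    mNeg k a ∉ Dk k := by
  rw [mem_Dk] at *
  unfold mNeg; split_ifs <;> omega

lemma mNeg_top {k : ℕ} : mNeg k (2 * (k + 1)) = k + 2 := by
  unfold mNeg; split_ifs <;> omega

lemma mNeg_one (k : ℕ) : mNeg k 1 = k + 2 := by
  unfold mNeg; split_ifs <;> omega

lemma mNeg_k2 {k : ℕ} (hk : 1 ≤ k) : mNeg k (k + 2) = 2 := by
  unfold mNeg; split_ifs <;> omega

lemma orbit (k : ℕ) (hk : 1 ≤ k) :
    ∀ i ≤ k, (mNeg k)^[2*i] 1 = i + 1 ∧ (mNeg k)^[2*i+1] 1 = k + 2 + i := by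
  intro i
  induction i with
  | zero =>
    intro _
    refine ⟨by simp, ?_⟩
    simp only [Nat.mul_zero, Nat.zero_add, Function.iterate_one]
    rw [mNeg_one]
  | succ i ih =>
    intro hi
    obtain ⟨h1, h2⟩ := ih (by omega)
    have e1 : (mNeg k)^[2*(i+1)] 1 = mNeg k ((mNeg k)^[2*i+1] 1) := by
      rw [show 2*(i+1) = (2*i+1)+1 by ring, Function.iterate_succ_apply']
    have e2 : (mNeg k)^[2*(i+1)+1] 1 = mNeg k ((mNeg k)^[2*(i+1)] 1) :=
      Function.iterate_succ_apply' _ _ _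
    have v1 : mNeg k (k + 2 + i) = i + 2 := by
      unfold mNeg; split_ifs <;> omega
    have v2 : mNeg k (i + 2) = k + 2 + (i + 1) := by
      unfold mNeg; split_ifs <;> omega
    refine ⟨by rw [e1, h2, v1], by rw [e2, e1, h2, v1, v2]⟩

lemma orbit_ne (k : ℕ) (hk : 1 ≤ k) : ∀ j ≤ 2 * k, (mNeg k)^[j] 1 ≠ 2 * (k + 1) := by
  intro j hj
  rcases Nat.even_or_odd j with ⟨i, hji⟩ | ⟨i, hji⟩
  · have := (orbit k hk i (by omega)).1
    rw [show j = 2*i by omega, this]; omega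
  · have := (orbit k hk i (by omega)).2
    rw [show j = 2*i+1 by omega, this]; omega

lemma hmap_mem {k a : ℕ} : hmap k a = 1 ↔ a ∈ Dk k := by
  unfold hmap; split_ifs with h <;> simp [h]

lemma hmap_mAnd {k a b : ℕ} : hmap k (mAnd k a b) = b2And (hmap k a) (hmap k b) := by
  unfold hmap mAnd b2And
  split_ifs <;> simp_all [one_not_mem_Dk, k2_mem_Dk]

lemma hmap_mOr {k a b : ℕ} : hmap k (mOr k a b) = b2Or (hmap k a) (hmap k b) := by
  unfold hmap mOr b2Or
  split_ifs <;> simp_all [one_not_mem_Dk, k2_mem_Dk]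

lemma hmap_mImp {k a b : ℕ} : hmap k (mImp k a b) = b2Imp (hmap k a) (hmap k b) := by
  unfold hmap mImp b2Imp
  split_ifs <;> simp_all [one_not_mem_Dk, k2_mem_Dk]

/-- Soundness of HkSys B (2k-1) with respect to the matrix M_k. -/
lemma soundMk (B : Set Rule) (hsnd : ∀ r ∈ B, SoundB2 r) (k : ℕ) (hk : 1 ≤ k)
    {Γ : Set Fm} {φ : Fm} (h : Derives (HkSys B (2 * k - 1)) Γ φ)
    (v : Fm → ℕ) (hv : IsValMk k v) (hΓ : ∀ ψ ∈ Γ, v ψ ∈ Dk k) : v φ ∈ Dk k := by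
  obtain ⟨hV, hAnd, hOr, hImp, hNeg, hCirc⟩ := hv
  induction h with
  | prem hmem => exact hΓ _ hmem
  | rule r σ hr hprem ih =>
    rcases hr with (hB | hax) | hcij
    · -- base rule, sound over B₂, transfer along hmap
      set w : Fm → ℕ := fun ψ => hmap k (v (subst σ ψ)) with hw
      have hwval : IsValB2 w := by
        refine ⟨fun φ => ?_, fun φ ψ => ?_, fun φ ψ => ?_, fun φ ψ => ?_⟩
        · simp only [hw, hmap]; split_ifs <;> simp
        · show hmap k (v (.conj (subst σ φ) (subst σ ψ))) = _
          rw [hAnd, hmap_mAnd]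
        · show hmap k (v (.disj (subst σ φ) (subst σ ψ))) = _
          rw [hOr, hmap_mOr]
        · show hmap k (v (.imp (subst σ φ) (subst σ ψ))) = _
          rw [hImp, hmap_mImp]
      have hwprem : ∀ ψ ∈ r.1, w ψ = 1 := fun ψ hψ => hmap_mem.mpr (ih ψ hψ)
      exact hmap_mem.mp (hsnd r hB w hwval hwprem)
    · -- the axioms Ax10, bc1, ci
      simp only [Set.mem_insert_iff, Set.mem_singleton_iff] at hax
      rcases hax with rfl | rfl | rfl
      · -- Ax10
        show v (subst σ ax10) ∈ Dk k
        rw [show subst σ ax10 = .disj (σ 0) (.neg (σ 0)) from rfl, hOr, hNeg,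
          mOr_mem]
        by_cases hd : v (σ 0) ∈ Dk k
        · exact Or.inl hd
        · exact Or.inr (mNeg_of_not_mem (hV (σ 0)) hd)
      · -- bc1
        show v (subst σ bc1) ∈ Dk k
        rw [show subst σ bc1 =
          .imp (.circ (σ 0)) (.imp (σ 0) (.imp (.neg (σ 0)) (σ 1))) from rfl,
          hImp, hImp, hImp, hCirc, hNeg, mImp_mem, mImp_mem, mImp_mem, mCirc_mem]
        intro h1 h2 h3
        exact absurd h3 (mNeg_not_mem_of_mem h2 h1)
      · -- ci
        show v (subst σ ci) ∈ Dk k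
        rw [show subst σ ci =
          .imp (.neg (.circ (σ 0))) (.conj (σ 0) (.neg (σ 0))) from rfl,
          hImp, hNeg, hCirc, hAnd, hNeg, mImp_mem, mAnd_mem]
        intro h1
        have htop : v (σ 0) = 2 * (k + 1) := by
          by_contra htop
          have : mCirc k (v (σ 0)) = k + 2 := by unfold mCirc; rw [if_neg htop]
          rw [this, mNeg_k2 hk, mem_Dk] at h1
          omega
        rw [htop, mNeg_top]
        exact ⟨by rw [mem_Dk]; omega, k2_mem_Dk⟩
    · -- the axioms ci_j for j ≤ 2k-1
      obtain ⟨j, hj, rfl⟩ := hcij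
      show v (subst σ (cij j)) ∈ Dk k
      rw [show subst σ (cij j) = .circ (subst σ (negIter j (.circ (.var 0)))) from rfl,
        hCirc, subst_negIter, negIter_val hNeg,
        show subst σ (Fm.circ (.var 0)) = .circ (σ 0) from rfl, hCirc, mCirc_mem]
      by_cases hx : v (σ 0) = 2 * (k + 1)
      · rw [show mCirc k (v (σ 0)) = 1 by unfold mCirc; rw [if_pos hx]]
        exact orbit_ne k hk j (by omega)
      · rw [show mCirc k (v (σ 0)) = k + 2 by unfold mCirc; rw [if_neg hx],
          ← mNeg_one k, ← Function.iterate_succ_apply]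
        exact orbit_ne k hk (j + 1) (by omega)

/-- The canonical valuation on M_k sending all variables to 1. -/
def vK (k : ℕ) : Fm → ℕ
  | .var _ => 1
  | .neg φ => mNeg k (vK k φ)
  | .circ φ => mCirc k (vK k φ)
  | .conj φ ψ => mAnd k (vK k φ) (vK k ψ)
  | .disj φ ψ => mOr k (vK k φ) (vK k ψ)
  | .imp φ ψ => mImp k (vK k φ) (vK k ψ)

lemma vK_mem (k : ℕ) (φ : Fm) : vK k φ ∈ Vk k := by
  induction φ with
  | var n => rw [vK, mem_Vk]; omega
  | neg φ ih =>
    rw [mem_Vk] at *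
    rw [vK]; unfold mNeg; split_ifs <;> omega
  | circ φ ih => rw [vK, mem_Vk]; unfold mCirc; split_ifs <;> omega
  | conj φ ψ ih1 ih2 => rw [vK, mem_Vk]; unfold mAnd; split_ifs <;> omega
  | disj φ ψ ih1 ih2 => rw [vK, mem_Vk]; unfold mOr; split_ifs <;> omega
  | imp φ ψ ih1 ih2 => rw [vK, mem_Vk]; unfold mImp; split_ifs <;> omega

lemma vK_isVal (k : ℕ) : IsValMk k (vK k) :=
  ⟨vK_mem k, fun _ _ => rfl, fun _ _ => rfl, fun _ _ => rfl, fun _ => rfl, fun _ => rfl⟩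

/-- ∘¬^{2k}∘p is a theorem of H^{2(k+1)−1} but not of H^{2k−1};
consequently the chain ⊢_{H^1} ⊆ ⊢_{H^3} ⊆ ⊢_{H^5} ⊆ … is strictly increasing. -/
theorem stmt11 (B : Set Rule)
    (hpos : ∀ r ∈ B, (∀ ψ ∈ r.1, Positive ψ) ∧ Positive r.2)
    (hsnd : ∀ r ∈ B, SoundB2 r)
    (k : ℕ) (hk : 1 ≤ k) :
    Derives (HkSys B (2 * (k + 1) - 1)) ∅ (cij (2 * k)) ∧
    ¬ Derives (HkSys B (2 * k - 1)) ∅ (cij (2 * k)) ∧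
    (∀ (Γ : Set Fm) (φ : Fm),
      Derives (HkSys B (2 * k - 1)) Γ φ → Derives (HkSys B (2 * (k + 1) - 1)) Γ φ) ∧
    Derives (HkSys B (2 * k - 1)) ≠ Derives (HkSys B (2 * (k + 1) - 1)) := by
  have hk2 : 2 * k ≤ 2 * (k + 1) - 1 := by omega
  -- Part 1: derivability in the larger system
  have part1 : Derives (HkSys B (2 * (k + 1) - 1)) ∅ (cij (2 * k)) := by
    have hmem : ((∅ : Finset Fm), cij (2 * k)) ∈ HkSys B (2 * (k + 1) - 1) :=
      Or.inr ⟨2 * k, hk2, rfl⟩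
    have := Derives.rule (H := HkSys B (2 * (k + 1) - 1)) (Γ := ∅)
      ((∅ : Finset Fm), cij (2 * k)) Fm.var hmem (by simp)
    rwa [subst_var] at this
  -- Part 2: non-derivability in the smaller system
  have part2 : ¬ Derives (HkSys B (2 * k - 1)) ∅ (cij (2 * k)) := by
    intro hder
    have hd := soundMk B hsnd k hk hder (vK k) (vK_isVal k) (by simp)
    have hval : vK k (cij (2 * k)) = 1 := by
      have h1 : vK k (cij (2 * k)) =
          mCirc k ((mNeg k)^[2 * k] (mCirc k 1)) := by
        rw [show cij (2 * k) = .circ (negIter (2 * k) (.circ (.var 0))) from rfl]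
        rw [show vK k (.circ (negIter (2 * k) (.circ (.var 0)))) =
          mCirc k (vK k (negIter (2 * k) (.circ (.var 0)))) from rfl]
        rw [negIter_val (k := k) (v := vK k) (fun φ => rfl)]
        rfl
      have h2 : mCirc k 1 = k + 2 := by simp only [mCirc]; split_ifs <;> omega
      have h3 : (mNeg k)^[2 * k] (k + 2) = 2 * (k + 1) := by
        rw [← mNeg_one k, ← Function.iterate_succ_apply]
        have := (orbit k hk k le_rfl).2
        rw [show 2 * k + 1 = (2*k)+1 from rfl] at this
        rw [this]; omega
      rw [h1, h2, h3]
      simp [mCirc]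
    rw [hval] at hd
    simp only [Dk, Set.mem_setOf_eq] at hd
    omega
  -- Part 3: monotonicity
  have part3 : ∀ (Γ : Set Fm) (φ : Fm),
      Derives (HkSys B (2 * k - 1)) Γ φ → Derives (HkSys B (2 * (k + 1) - 1)) Γ φ :=
    fun Γ φ h => derives_mono (hkSys_mono B (by omega)) h
  refine ⟨part1, part2, part3, fun heq => part2 (heq.symm ▸ part1)⟩
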